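/- For 0 ≤ k < n, the hook Schur function satisfies s_{(n-k,1^k)}[X] = (-q)^{n-k-1} Σ C_α[X;q], the sum over compositions α of n with first part α_1 ≥ n-k. -/

import Mathlib

open Finset MvPolynomial

noncomputable section

/-- Base field `F = ℚ(q)`. -/
abbrev F : Type := RatFunc ℚ

/-- The parameter `q`. -/
noncomputable def q : F := RatFunc.X

/-- The ring of symmetric functions `Λ = F[p₁, p₂, p₃, …]`, where the variable
`X k` represents the power sum `p_{k+1}`. -/
abbrev SymF : Type := MvPolynomial ℕ F

/-- `pp k` is the power sum `p_k` for `k ≥ 1`. -/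
noncomputable def pp (k : ℕ) : SymF := MvPolynomial.X (k - 1)

/-- Complete homogeneous symmetric functions, via Newton's identity
`(n+1) h_{n+1} = ∑_{k=1}^{n+1} p_k h_{n+1-k}`. -/
noncomputable def hN : ℕ → SymF
  | 0 => 1
  | n + 1 => ((n : F) + 1)⁻¹ • ∑ k ∈ Finset.range (n + 1), pp (k + 1) * hN (n - k)
  termination_by n => n
  decreasing_by omega

/-- Elementary symmetric functions, via Newton's identity
`(n+1) e_{n+1} = ∑_{k=1}^{n+1} (-1)^{k-1} p_k e_{n+1-k}`. -/
noncomputable def eN : ℕ → SymF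
  | 0 => 1
  | n + 1 => ((n : F) + 1)⁻¹ • ∑ k ∈ Finset.range (n + 1), ((-1 : F) ^ k) • (pp (k + 1) * eN (n - k))
  termination_by n => n
  decreasing_by omega

/-- `hh m = h_m` for `m ≥ 0` and `0` for `m < 0`. -/
noncomputable def hh (m : ℤ) : SymF := if 0 ≤ m then hN m.toNat else 0

/-- `ee m = e_m` for `m ≥ 0` and `0` for `m < 0`. -/
noncomputable def ee (m : ℤ) : SymF := if 0 ≤ m then eN m.toNat else 0

/-- The plethystic translation `f[X] ↦ f[X + (1-q)z]`, determined by
`p_k ↦ p_k + (1-q^k) z^k`.  The coefficient of `z^r` computes `h_r[X(1-q)]^⊥ f`. -/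
noncomputable def Tq : SymF →ₐ[F] Polynomial SymF :=
  MvPolynomial.aeval fun k =>
    Polynomial.C (MvPolynomial.X k) +
      Polynomial.C (MvPolynomial.C (1 - q ^ (k + 1))) * Polynomial.X ^ (k + 1)

/-- The operator `h_r[X(1-q)]^⊥`. -/
noncomputable def Dq (r : ℕ) (P : SymF) : SymF := (Tq P).coeff r

/-- The plethystic translation `f[X] ↦ f[X - z]`, determined by `p_k ↦ p_k - z^k`;
one has `f[X - z] = ∑_k (-z)^k (e_k^⊥ f)[X]`. -/
noncomputable def T1 : SymF →ₐ[F] Polynomial SymF :=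
  MvPolynomial.aeval fun k =>
    Polynomial.C (MvPolynomial.X k) - Polynomial.X ^ (k + 1)

/-- The operator `e_r^⊥`. -/
noncomputable def eperp (r : ℕ) (P : SymF) : SymF := ((-1 : F) ^ r) • (T1 P).coeff r

/-- The Hall–Littlewood creation operator
`ℂ_m P = (-1/q)^{m-1} ∑_{r ≥ 0} q^{-r} h_{m+r} · (h_r[X(1-q)])^⊥ P`
(the sum is finite: terms with `r > deg_z (Tq P)` vanish). -/
noncomputable def Cop (m : ℤ) (P : SymF) : SymF :=
  ((-q⁻¹ : F) ^ (m - 1)) •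
    ∑ r ∈ Finset.range ((Tq P).natDegree + 1), ((q⁻¹ : F) ^ r) • (hh (m + r) * Dq r P)

/-- The creation operator `𝔹_m P = ∑_{r ≥ 0} (-1)^r e_{m+r} · (h_r[X(1-q)])^⊥ P`. -/
noncomputable def Bop (m : ℤ) (P : SymF) : SymF :=
  ∑ r ∈ Finset.range ((Tq P).natDegree + 1), ((-1 : F) ^ r) • (ee (m + r) * Dq r P)

/-- The Bernstein (Schur) creation operator `S_m P = ∑_{r ≥ 0} (-1)^r h_{m+r} · e_r^⊥ P`. -/
noncomputable def Sop (m : ℤ) (P : SymF) : SymF :=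
  ∑ r ∈ Finset.range ((T1 P).natDegree + 1), ((-1 : F) ^ r) • (hh (m + r) * eperp r P)

/-- `C_α[X;q] = ℂ_{α₁} ℂ_{α₂} ⋯ ℂ_{α_ℓ}(1)`. -/
noncomputable def Cfun : List ℕ → SymF
  | [] => 1
  | a :: l => Cop a (Cfun l)

/-- `B_α[X;q] = 𝔹_{α_ℓ} 𝔹_{α_{ℓ-1}} ⋯ 𝔹_{α₁}(1)`. -/
noncomputable def Bfun (l : List ℕ) : SymF := l.foldl (fun acc a => Bop a acc) 1

end

/-- The touch set `{0} ∪ Des(c)` of a composition `c` of `n`: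
the set of partial sums `c₁ + ⋯ + c_i` for `0 ≤ i < ℓ(c)` (0-based touch rows). -/
def touchSet {n : ℕ} (c : Composition n) : Finset ℕ :=
  (Finset.range c.length).image fun i => c.sizeUpTo i

/-- The descent set of a composition: its proper nonzero partial sums. -/
def DesSet {n : ℕ} (c : Composition n) : Finset ℕ := (touchSet c).erase 0

/-- `Refines β α` means `β ≤ α`: `β` is finer than `α`, i.e. `Des(α) ⊆ Des(β)`. -/
abbrev Refines {n : ℕ} (β α : Composition n) : Prop := touchSet α ⊆ touchSet β

/-- `doffC α β = doff_α(DP(β))` for `β ≤ α`: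
`∑_{k=1}^{ℓ(α)} (ℓ(α)-k) r_k` where `r_k` is the number of parts of `β`
lying inside the `k`-th part of `α`. -/
def doffC {n : ℕ} (α β : Composition n) : ℕ :=
  ∑ k ∈ Finset.range α.length,
    (α.length - 1 - k) *
      ((touchSet β).filter fun s => α.sizeUpTo k ≤ s ∧ s < α.sizeUpTo (k + 1)).card

/-- The reversed composition. -/
def revC {n : ℕ} (c : Composition n) : Composition n :=
  ⟨c.blocks.reverse, fun hi => c.blocks_pos (List.mem_reverse.mp hi), by
    rw [List.sum_reverse]; exact c.blocks_sum⟩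

/-- A Dyck path from `(0,0)` to `(n,n)`, encoded by its arm sequence:
`arm i` is the number of cells between the path and the diagonal in row `i+1`
(rows are 0-indexed here). -/
structure DyckPath (n : ℕ) where
  arm : ℕ → ℕ
  arm_zero : 0 < n → arm 0 = 0
  arm_step : ∀ i, i + 1 < n → arm (i + 1) ≤ arm i + 1
  arm_outside : ∀ i, n ≤ i → arm i = 0

/-- `area(D) = ∑ᵢ aᵢ`. -/
def area {n : ℕ} (D : DyckPath n) : ℕ := ∑ i ∈ Finset.range n, D.arm i

/-- `dinv(D) = #{(i,j) : i < j, aᵢ - aⱼ ∈ {0,1}}`. -/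
def dinv {n : ℕ} (D : DyckPath n) : ℕ :=
  ((Finset.range n ×ˢ Finset.range n).filter fun p =>
      p.1 < p.2 ∧ (D.arm p.1 = D.arm p.2 ∨ D.arm p.1 = D.arm p.2 + 1)).card

/-- `IsTouch D α` says that `touch(D) = α`: the rows where the arm vanishes are
exactly the partial sums of `α`. -/
def IsTouch {n : ℕ} (D : DyckPath n) (α : Composition n) : Prop :=
  ∀ i < n, (D.arm i = 0 ↔ i ∈ touchSet α)

/-- `doff_α(D)`, for a path `D` whose touch composition refines `α`. -/
def doffD {n : ℕ} (α : Composition n) (D : DyckPath n) : ℕ :=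
  ∑ k ∈ Finset.range α.length,
    (α.length - 1 - k) *
      ((Finset.Ico (α.sizeUpTo k) (α.sizeUpTo (k + 1))).filter fun i => D.arm i = 0).card

instance {n : ℕ} : DecidableEq (Composition n) := fun a b =>
  decidable_of_iff (a.blocks = b.blocks) ⟨fun h => by cases a; cases b; simpa using h,
    fun h => by rw [h]⟩

noncomputable section

/-- Plethystic evaluation at the alphabet `1 - q`: the algebra map `p_k ↦ 1 - q^k`. -/
noncomputable def evOneMinusQ : SymF →ₐ[F] F := MvPolynomial.aeval fun k => 1 - q ^ (k + 1)

/-- The cells of the Young diagram of a partition given as a (weakly decreasing)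
list of parts: `(i, j)` with `j < lᵢ` (row `i`, column `j`, both 0-based). -/
def pcells (l : List ℕ) : Finset (ℕ × ℕ) :=
  (Finset.range l.length ×ˢ Finset.range (l.foldr max 0)).filter fun c => c.2 < l.getD c.1 0

/-- The arm of a cell: number of cells strictly to its right in its row. -/
def armC (l : List ℕ) (c : ℕ × ℕ) : ℕ := l.getD c.1 0 - c.2 - 1

/-- The leg of a cell: number of cells of the diagram in its column in later rows. -/
def legC (l : List ℕ) (c : ℕ × ℕ) : ℕ :=
  ((Finset.Ico (c.1 + 1) l.length).filter fun i => c.2 < l.getD i 0).card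

/-- The `k`-th part (`k ≥ 1`) of the conjugate partition: `μ'_k = #{i : μᵢ ≥ k}`. -/
def conjPart (l : List ℕ) (k : ℕ) : ℕ := l.countP fun x => k ≤ x

/-- The multiplicity `m_i(μ')` of `i` among the parts of the conjugate partition. -/
def mConj (l : List ℕ) (i : ℕ) : ℕ :=
  ((Finset.Icc 1 l.headI).filter fun k => conjPart l k = i).card

/-- `n(μ') = ∑ (k-1) μ'_k`. -/
def nConj (l : List ℕ) : ℕ := ∑ k ∈ Finset.Icc 1 l.headI, (k - 1) * conjPart l k

/-- The `q`-Pochhammer symbol `(q;q)_k = ∏_{j=1}^k (1 - q^j)` as an element of `F`. -/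
noncomputable def qpoch (k : ℕ) : F := ∏ j ∈ Finset.Icc 1 k, (1 - q ^ j)

end

-- scalar lemmas
lemma q_ne_zero : (q : F) ≠ 0 := RatFunc.X_ne_zero

noncomputable def cc : ℕ → F := fun r => if r = 0 then 1 else (1 - q) * (-q) ^ (r - 1)

lemma cc_zero : cc 0 = 1 := rfl
lemma cc_succ (r : ℕ) : cc (r + 1) = (1 - q) * (-q) ^ r := by simp [cc]
lemma cc_succ_succ (r : ℕ) : cc (r + 2) = (-q) * cc (r + 1) := by
  rw [cc_succ, cc_succ]; ring

lemma scalarNewton (n : ℕ) :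
    ∑ k ∈ Finset.range (n + 1), (-1 : F) ^ k * (1 - q ^ (k + 1)) * cc (n - k)
      = ((n : F) + 1) * cc (n + 1) := by
  induction n with
  | zero => simp [cc_zero, cc_succ]
  | succ n ih =>
    rw [Finset.sum_range_succ, Finset.sum_range_succ]
    rw [Finset.sum_range_succ] at ih
    have h1 : ∀ k ∈ Finset.range n,
        (-1 : F) ^ k * (1 - q ^ (k + 1)) * cc (n + 1 - k)
          = (-q) * ((-1 : F) ^ k * (1 - q ^ (k + 1)) * cc (n - k)) := by
      intro k hk
      have hk' : k < n := Finset.mem_range.mp hk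
      obtain ⟨m, hm⟩ : ∃ m, n - k = m + 1 := ⟨n - k - 1, by omega⟩
      have h2 : n + 1 - k = m + 2 := by omega
      rw [h2, hm, cc_succ_succ]
      ring
    rw [Finset.sum_congr rfl h1, ← Finset.mul_sum]
    have h2 : ∑ k ∈ Finset.range n, (-1 : F) ^ k * (1 - q ^ (k + 1)) * cc (n - k)
        = ((n : F) + 1) * cc (n + 1) - (-1 : F) ^ n * (1 - q ^ (n + 1)) * cc 0 := by
      rw [← ih]; simp
    rw [h2]
    have e1 : n + 1 - n = 1 := by omega
    rw [e1, Nat.sub_self]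
    simp only [cc_zero]
    rw [show (1 : ℕ) = 0 + 1 from rfl, cc_succ, cc_succ, cc_succ]
    push_cast
    ring

lemma scalarL (s : ℕ) :
    ∑ b ∈ Finset.range (s + 1), (-q⁻¹ : F) ^ (s - b) * (q⁻¹ : F) ^ b * cc b
      = (-1 : F) ^ s := by
  induction s with
  | zero => simp [cc_zero]
  | succ s ih =>
    rw [Finset.sum_range_succ]
    have h1 : ∀ b ∈ Finset.range (s + 1),
        (-q⁻¹ : F) ^ (s + 1 - b) * (q⁻¹ : F) ^ b * cc b
          = (-q⁻¹) * ((-q⁻¹ : F) ^ (s - b) * (q⁻¹ : F) ^ b * cc b) := by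
      intro b hb
      have hb' : b < s + 1 := Finset.mem_range.mp hb
      have h2 : s + 1 - b = (s - b) + 1 := by omega
      rw [h2, pow_succ]; ring
    rw [Finset.sum_congr rfl h1, ← Finset.mul_sum, ih]
    rw [Nat.sub_self, cc_succ]
    have hq : (q : F) ≠ 0 := q_ne_zero
    field_simp
    have h3 : (q : F) ^ s * q⁻¹ ^ s = 1 := by rw [← mul_pow, mul_inv_cancel₀ hq, one_pow]
    have h4 : (q : F) * q⁻¹ = 1 := mul_inv_cancel₀ hq
    linear_combination (q * q⁻¹ * (-1 : F) ^ s - q ^ 2 * q⁻¹ * (-1 : F) ^ s) * h3 +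
      ((-1 : F) ^ s - q * (-1 : F) ^ s) * h4
set_option maxHeartbeats 1000000
set_option synthInstance.maxHeartbeats 400000

instance : CharZero F :=
  charZero_of_injective_algebraMap (RatFunc.algebraMap_injective ℚ)

-- Newton recursions multiplied up
lemma natF_ne_zero (n : ℕ) : ((n : F) + 1) ≠ 0 := by
  have : ((n : F) + 1) = ((n + 1 : ℕ) : F) := by push_cast; ring
  rw [this]
  exact Nat.cast_ne_zero.mpr (Nat.succ_ne_zero n)

lemma eN_rec (n : ℕ) :
    ∑ k ∈ Finset.range (n + 1), ((-1 : F) ^ k) • (pp (k + 1) * eN (n - k))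
      = ((n : F) + 1) • eN (n + 1) := by
  rw [eN, smul_smul, mul_inv_cancel₀ (natF_ne_zero n), one_smul]

lemma hN_rec (n : ℕ) :
    ∑ k ∈ Finset.range (n + 1), pp (k + 1) * hN (n - k) = ((n : F) + 1) • hN (n + 1) := by
  rw [hN, smul_smul, mul_inv_cancel₀ (natF_ne_zero n), one_smul]

-- triangle reindexing
lemma triangle {M : Type*} [AddCommMonoid M] (N : ℕ) (f : ℕ → ℕ → M) :
    ∑ t ∈ Finset.range N, ∑ k ∈ Finset.range (N - t), f t k
      = ∑ s ∈ Finset.range N, ∑ t ∈ Finset.range (s + 1), f t (s - t) := by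
  rw [Finset.sum_sigma', Finset.sum_sigma']
  apply Finset.sum_nbij' (i := fun p => (⟨p.1 + p.2, p.1⟩ : (_ : ℕ) × ℕ))
    (j := fun p => (⟨p.2, p.1 - p.2⟩ : (_ : ℕ) × ℕ))
  · intro a ha
    simp only [Finset.mem_sigma, Finset.mem_range] at ha ⊢
    omega
  · intro a ha
    simp only [Finset.mem_sigma, Finset.mem_range] at ha ⊢
    omega
  · intro a ha
    obtain ⟨x, y⟩ := a
    simp only [Finset.mem_sigma, Finset.mem_range] at ha
    show (⟨x, x + y - x⟩ : (_ : ℕ) × ℕ) = ⟨x, y⟩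
    rw [Nat.add_sub_cancel_left]
  · intro a ha
    obtain ⟨x, y⟩ := a
    simp only [Finset.mem_sigma, Finset.mem_range] at ha
    show (⟨y + (x - y), y⟩ : (_ : ℕ) × ℕ) = ⟨x, y⟩
    have h : y + (x - y) = x := by omega
    rw [h]
  · intro a ha
    simp only [Finset.mem_sigma, Finset.mem_range] at ha
    simp only [Nat.add_sub_cancel_left]

lemma triangle_swap {M : Type*} [AddCommMonoid M] (N : ℕ) (f : ℕ → ℕ → M) :
    ∑ t ∈ Finset.range N, ∑ k ∈ Finset.range (N - t), f t k
      = ∑ k ∈ Finset.range N, ∑ t ∈ Finset.range (N - k), f t k := by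
  rw [triangle N f, triangle N (fun k t => f t k)]
  apply Finset.sum_congr rfl
  intro s hs
  rw [← Finset.sum_range_reflect]
  apply Finset.sum_congr rfl
  intro t ht
  have ht' : t < s + 1 := Finset.mem_range.mp ht
  congr 1 <;> omega
lemma Tq_pp (k : ℕ) :
    Tq (pp (k + 1)) = Polynomial.C (pp (k + 1)) +
      (1 - q ^ (k + 1)) • (Polynomial.X ^ (k + 1) : Polynomial SymF) := by
  have h : pp (k + 1) = MvPolynomial.X k := by simp [pp]
  rw [h, Tq, MvPolynomial.aeval_X]
  congr 1
  rw [Algebra.smul_def, Polynomial.algebraMap_apply, MvPolynomial.algebraMap_eq]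

lemma Tq_eN (n : ℕ) : Tq (eN n)
    = ∑ r ∈ Finset.range (n + 1), cc r • (Polynomial.C (eN (n - r)) * Polynomial.X ^ r) := by
  induction n using Nat.strong_induction_on with
  | _ n ih =>
  match n with
  | 0 => simp [eN, cc_zero]
  | Nat.succ n =>
    apply smul_right_injective (Polynomial SymF) (natF_ne_zero n)
    show ((n : F) + 1) • Tq (eN (n + 1)) = ((n : F) + 1) •
      ∑ r ∈ Finset.range (n + 1 + 1), cc r • (Polynomial.C (eN (n + 1 - r)) * Polynomial.X ^ r)
    rw [← map_smul, ← eN_rec, map_sum]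
    have hsummand : ∀ k ∈ Finset.range (n + 1),
        Tq ((-1 : F) ^ k • (pp (k + 1) * eN (n - k)))
          = (∑ r ∈ Finset.range (n + 1 - k), ((-1 : F) ^ k * cc r) •
              (Polynomial.C (pp (k + 1) * eN (n - k - r)) * Polynomial.X ^ r))
            + (∑ r ∈ Finset.range (n + 1 - k), ((-1 : F) ^ k * (1 - q ^ (k + 1)) * cc r) •
              (Polynomial.C (eN (n - k - r)) * Polynomial.X ^ (k + 1 + r))) := by
      intro k hk
      have hk' : k < n + 1 := Finset.mem_range.mp hk
      rw [map_smul, map_mul, Tq_pp, ih (n - k) (by omega), add_mul]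
      have hrange : n - k + 1 = n + 1 - k := by omega
      rw [smul_add, hrange]
      congr 1
      · rw [Finset.mul_sum, Finset.smul_sum]
        apply Finset.sum_congr rfl
        intro r hr
        rw [mul_smul_comm, ← mul_assoc, ← Polynomial.C_mul, smul_smul]
      · rw [Finset.mul_sum, Finset.smul_sum]
        apply Finset.sum_congr rfl
        intro r hr
        rw [smul_mul_assoc, mul_smul_comm, smul_smul, smul_smul,
          mul_left_comm (Polynomial.X ^ (k + 1)), ← pow_add]
    rw [Finset.sum_congr rfl hsummand, Finset.sum_add_distrib]
    have hS1 : ∑ k ∈ Finset.range (n + 1), ∑ r ∈ Finset.range (n + 1 - k),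
        ((-1 : F) ^ k * cc r) • (Polynomial.C (pp (k + 1) * eN (n - k - r)) * Polynomial.X ^ r)
        = ∑ s ∈ Finset.range (n + 2), (((n + 1 - s : ℕ) : F) * cc s) •
            (Polynomial.C (eN (n + 1 - s)) * Polynomial.X ^ s) := by
      rw [triangle_swap]
      rw [Finset.sum_range_succ (n := n + 1)]
      have hlast : (((n + 1 - (n + 1) : ℕ) : F) * cc (n + 1)) •
          (Polynomial.C (eN (n + 1 - (n + 1))) * Polynomial.X ^ (n + 1)) = 0 := by
        rw [Nat.sub_self]; simp
      rw [hlast, add_zero]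
      apply Finset.sum_congr rfl
      intro r hr
      have hr' : r < n + 1 := Finset.mem_range.mp hr
      have hrw : n + 1 - r = (n - r) + 1 := by omega
      rw [hrw]
      have h1 : ∀ k ∈ Finset.range ((n - r) + 1),
          ((-1 : F) ^ k * cc r) • (Polynomial.C (pp (k + 1) * eN (n - k - r)) * Polynomial.X ^ r)
            = cc r • (((-1 : F) ^ k • Polynomial.C (pp (k + 1) * eN (n - r - k))) * Polynomial.X ^ r) := by
        intro k hkk
        have hnk : n - k - r = n - r - k := by omega
        rw [hnk, smul_mul_assoc, smul_smul, mul_comm ((-1 : F) ^ k) (cc r)]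
      rw [Finset.sum_congr rfl h1, ← Finset.smul_sum, ← Finset.sum_mul]
      have h2 : ∑ k ∈ Finset.range ((n - r) + 1),
          (-1 : F) ^ k • Polynomial.C (pp (k + 1) * eN (n - r - k))
          = (((n - r : ℕ) : F) + 1) • Polynomial.C (eN (n - r + 1)) := by
        simp_rw [Polynomial.smul_C]
        rw [← map_sum, eN_rec]
      rw [h2, smul_mul_assoc, smul_smul]
      congr 1
      · have : ((n - r + 1 : ℕ) : F) = ((n - r : ℕ) : F) + 1 := by push_cast; ring
        rw [this]; ring
    have hS2 : ∑ k ∈ Finset.range (n + 1), ∑ r ∈ Finset.range (n + 1 - k),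
        ((-1 : F) ^ k * (1 - q ^ (k + 1)) * cc r) •
          (Polynomial.C (eN (n - k - r)) * Polynomial.X ^ (k + 1 + r))
        = ∑ s ∈ Finset.range (n + 2), ((s : F) * cc s) •
            (Polynomial.C (eN (n + 1 - s)) * Polynomial.X ^ s) := by
      rw [triangle]
      rw [Finset.sum_range_succ' (n := n + 1)]
      simp only [Nat.cast_zero, zero_mul, zero_smul, add_zero]
      apply Finset.sum_congr rfl
      intro s hs
      have hs' : s < n + 1 := Finset.mem_range.mp hs
      have h1 : ∀ k ∈ Finset.range (s + 1),
          ((-1 : F) ^ k * (1 - q ^ (k + 1)) * cc (s - k)) •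
            (Polynomial.C (eN (n - k - (s - k))) * Polynomial.X ^ (k + 1 + (s - k)))
          = ((-1 : F) ^ k * (1 - q ^ (k + 1)) * cc (s - k)) •
            (Polynomial.C (eN (n - s)) * Polynomial.X ^ (s + 1)) := by
        intro k hkk
        have hkk' : k < s + 1 := Finset.mem_range.mp hkk
        have e1 : n - k - (s - k) = n - s := by omega
        have e2 : k + 1 + (s - k) = s + 1 := by omega
        rw [e1, e2]
      rw [Finset.sum_congr rfl h1, ← Finset.sum_smul, scalarNewton]
      have hc : ((s + 1 : ℕ) : F) = (s : F) + 1 := by push_cast; ring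
      have hi : n + 1 - (s + 1) = n - s := by omega
      rw [hc, hi]
    rw [hS1, hS2, ← Finset.sum_add_distrib, Finset.smul_sum]
    apply Finset.sum_congr rfl
    intro s hs
    have hs' : s < n + 2 := Finset.mem_range.mp hs
    rw [← add_smul, smul_smul]
    congr 1
    have : ((n + 1 - s : ℕ) : F) = ((n + 1 : ℕ) : F) - (s : F) := by
      rw [Nat.cast_sub (by omega)]
    rw [this]
    push_cast
    ring
lemma Dq_eN (r j : ℕ) : Dq r (eN j) = if r ≤ j then cc r • eN (j - r) else 0 := by
  show (Tq (eN j)).coeff r = _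
  rw [Tq_eN, Polynomial.finset_sum_coeff]
  simp only [Polynomial.coeff_smul, Polynomial.coeff_C_mul, Polynomial.coeff_X_pow,
    mul_ite, mul_one, mul_zero, smul_ite, smul_zero]
  rw [Finset.sum_ite_eq (Finset.range (j + 1)) r (fun i => cc i • eN (j - i))]
  simp only [Finset.mem_range]
  split_ifs with h1 h2 h2 <;> first | rfl | omega
lemma Tq_eN_natDegree (j : ℕ) : (Tq (eN j)).natDegree ≤ j := by
  apply Polynomial.natDegree_le_iff_coeff_eq_zero.mpr
  intro N hN
  have h := Dq_eN N j
  rw [if_neg (by omega)] at h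
  exact h

lemma Cop_eq (m : ℤ) (P : SymF) (N : ℕ) (hdeg : (Tq P).natDegree < N) :
    Cop m P = ((-q⁻¹ : F) ^ (m - 1)) •
      ∑ r ∈ Finset.range N, ((q⁻¹ : F) ^ r) • (hh (m + r) * Dq r P) := by
  rw [Cop]
  congr 1
  apply Finset.sum_subset
  · intro x hx
    simp only [Finset.mem_range] at hx ⊢
    omega
  · intro x _ hnx
    simp only [Finset.mem_range] at hnx
    have hz : Dq x P = 0 :=
      Polynomial.coeff_eq_zero_of_natDegree_lt (by omega)
    rw [hz, mul_zero, smul_zero]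

lemma Cop_add (m : ℤ) (P Q : SymF) : Cop m (P + Q) = Cop m P + Cop m Q := by
  set N := max (Tq P).natDegree (Tq Q).natDegree + 1 with hN
  have hP : (Tq P).natDegree < N := by have := le_max_left (Tq P).natDegree (Tq Q).natDegree; omega
  have hQ : (Tq Q).natDegree < N := by have := le_max_right (Tq P).natDegree (Tq Q).natDegree; omega
  have hPQ : (Tq (P + Q)).natDegree < N := by
    rw [map_add]
    have := Polynomial.natDegree_add_le (Tq P) (Tq Q)
    omega
  rw [Cop_eq m P N hP, Cop_eq m Q N hQ, Cop_eq m (P + Q) N hPQ, ← smul_add,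
    ← Finset.sum_add_distrib]
  congr 1
  apply Finset.sum_congr rfl
  intro r _
  have hd : Dq r (P + Q) = Dq r P + Dq r Q := by
    show (Tq (P + Q)).coeff r = (Tq P).coeff r + (Tq Q).coeff r
    rw [map_add, Polynomial.coeff_add]
  rw [hd, mul_add, smul_add]

lemma Cop_zero (m : ℤ) : Cop m 0 = 0 := by
  simp [Cop, Dq]

lemma Cop_sum {α : Type*} (s : Finset α) (f : α → SymF) (m : ℤ) :
    Cop m (∑ a ∈ s, f a) = ∑ a ∈ s, Cop m (f a) := by
  classical
  induction s using Finset.induction with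
  | empty => simp [Cop_zero]
  | insert _ _ ha ih => rw [Finset.sum_insert ha, Cop_add, ih, Finset.sum_insert ha]

lemma Cop_eN (a j : ℕ) (ha : 1 ≤ a) :
    Cop (a : ℤ) (eN j) = ∑ r ∈ Finset.range (j + 1),
      ((-q⁻¹ : F) ^ (a - 1) * (q⁻¹ : F) ^ r * cc r) • (hN (a + r) * eN (j - r)) := by
  rw [Cop_eq (a : ℤ) (eN j) (j + 1) (by have := Tq_eN_natDegree j; omega), Finset.smul_sum]
  apply Finset.sum_congr rfl
  intro r hr
  have hr' : r < j + 1 := Finset.mem_range.mp hr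
  have h1 : hh ((a : ℤ) + r) = hN (a + r) := by
    have hc : ((a : ℤ) + r) = ((a + r : ℕ) : ℤ) := by push_cast; ring
    rw [hh, hc, if_pos (Int.natCast_nonneg _), Int.toNat_natCast]
  have h2 : Dq r (eN j) = cc r • eN (j - r) := by rw [Dq_eN, if_pos (by omega)]
  have hz : (-q⁻¹ : F) ^ ((a : ℤ) - 1) = (-q⁻¹ : F) ^ (a - 1 : ℕ) := by
    have : ((a : ℤ) - 1) = ((a - 1 : ℕ) : ℤ) := by omega
    rw [this, zpow_natCast]
  rw [h1, h2, hz, mul_smul_comm, smul_smul, smul_smul, mul_assoc]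
lemma hN_zero : hN 0 = 1 := by simp [hN]

lemma he_cancel (n : ℕ) (hn : 1 ≤ n) :
    ∑ t ∈ Finset.range (n + 1), ((-1 : F) ^ t) • (hN t * eN (n - t)) = 0 := by
  have hne : (n : F) ≠ 0 := Nat.cast_ne_zero.mpr (by omega)
  suffices h : (n : F) • (∑ t ∈ Finset.range (n + 1), ((-1 : F) ^ t) • (hN t * eN (n - t))) = 0 by
    rcases smul_eq_zero.mp h with h' | h'
    · exact absurd h' hne
    · exact h'
  rw [Finset.smul_sum]
  have split : ∀ t ∈ Finset.range (n + 1),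
      (n : F) • ((-1 : F) ^ t • (hN t * eN (n - t)))
        = (-1 : F) ^ t • (((t : F) • hN t) * eN (n - t))
          + (-1 : F) ^ t • (hN t * (((n - t : ℕ) : F) • eN (n - t))) := by
    intro t ht
    have ht' : t < n + 1 := Finset.mem_range.mp ht
    have hcast : (n : F) = (t : F) + ((n - t : ℕ) : F) := by
      have hnn : n = t + (n - t) := by omega
      calc (n : F) = ((t + (n - t) : ℕ) : F) := by rw [← hnn]
        _ = (t : F) + ((n - t : ℕ) : F) := by push_cast; ring
    rw [smul_comm, hcast, add_smul, smul_add]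
    congr 1
    · rw [smul_mul_assoc]
    · rw [mul_smul_comm]
  rw [Finset.sum_congr rfl split, Finset.sum_add_distrib]
  have hS1 : ∑ t ∈ Finset.range (n + 1), (-1 : F) ^ t • (((t : F) • hN t) * eN (n - t))
      = ∑ k ∈ Finset.range n, ∑ u ∈ Finset.range (n - k),
          (-1 : F) ^ (k + u + 1) • (pp (k + 1) * hN u * eN (n - (k + u + 1))) := by
    rw [Finset.sum_range_succ']
    simp only [Nat.cast_zero, zero_smul, zero_mul, smul_zero, add_zero]
    have step : ∀ t ∈ Finset.range n,
        (-1 : F) ^ (t + 1) • ((((t + 1 : ℕ) : F) • hN (t + 1)) * eN (n - (t + 1)))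
          = ∑ k ∈ Finset.range (t + 1),
              (-1 : F) ^ (k + (t - k) + 1) • (pp (k + 1) * hN (t - k) * eN (n - (k + (t - k) + 1))) := by
      intro t ht
      have hc : ((t + 1 : ℕ) : F) = (t : F) + 1 := by push_cast; ring
      rw [hc, ← hN_rec, Finset.sum_mul, Finset.smul_sum]
      apply Finset.sum_congr rfl
      intro k hk
      have hk' : k < t + 1 := Finset.mem_range.mp hk
      have e1 : k + (t - k) + 1 = t + 1 := by omega
      rw [e1]
    rw [Finset.sum_congr rfl step]
    exact (triangle n (fun k u =>
      (-1 : F) ^ (k + u + 1) • (pp (k + 1) * hN u * eN (n - (k + u + 1))))).symm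
  have hS2 : ∑ t ∈ Finset.range (n + 1), (-1 : F) ^ t • (hN t * (((n - t : ℕ) : F) • eN (n - t)))
      = ∑ k ∈ Finset.range n, ∑ t ∈ Finset.range (n - k),
          (-1 : F) ^ (t + k) • (pp (k + 1) * hN t * eN (n - (t + k + 1))) := by
    rw [Finset.sum_range_succ]
    simp only [Nat.sub_self, Nat.cast_zero, zero_smul, mul_zero, smul_zero, add_zero]
    have step : ∀ t ∈ Finset.range n,
        (-1 : F) ^ t • (hN t * (((n - t : ℕ) : F) • eN (n - t)))
          = ∑ k ∈ Finset.range (n - t),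
              (-1 : F) ^ (t + k) • (pp (k + 1) * hN t * eN (n - (t + k + 1))) := by
      intro t ht
      have ht' : t < n := Finset.mem_range.mp ht
      have hm : n - t = (n - 1 - t) + 1 := by omega
      rw [hm]
      have hc : (((n - 1 - t) + 1 : ℕ) : F) = ((n - 1 - t : ℕ) : F) + 1 := by push_cast; ring
      rw [hc, ← eN_rec (n - 1 - t), Finset.mul_sum, Finset.smul_sum]
      apply Finset.sum_congr rfl
      intro k hk
      have hk' : k < n - 1 - t + 1 := Finset.mem_range.mp hk
      have e1 : n - 1 - t - k = n - (t + k + 1) := by omega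
      rw [mul_smul_comm, smul_smul, ← pow_add, e1, ← mul_assoc, mul_comm (hN t) (pp (k + 1))]
    rw [Finset.sum_congr rfl step]
    exact triangle_swap n (fun t k =>
      (-1 : F) ^ (t + k) • (pp (k + 1) * hN t * eN (n - (t + k + 1))))
  rw [hS1, hS2, ← Finset.sum_add_distrib]
  apply Finset.sum_eq_zero
  intro k hk
  rw [← Finset.sum_add_distrib]
  apply Finset.sum_eq_zero
  intro u hu
  rw [Nat.add_comm u k, pow_succ, mul_neg_one, neg_smul, neg_add_cancel]

lemma eN_expand (n : ℕ) (hn : 1 ≤ n) :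
    eN n = ∑ u ∈ Finset.range n, ((-1 : F) ^ (n - 1 - u)) • (hN (n - u) * eN u) := by
  have h := he_cancel n hn
  rw [Finset.sum_range_succ'] at h
  simp only [pow_zero, one_smul, hN_zero, one_mul, Nat.sub_zero] at h
  have hneg : ∀ j ∈ Finset.range n,
      (-1 : F) ^ (j + 1) • (hN (j + 1) * eN (n - (j + 1)))
        = -((-1 : F) ^ j • (hN (j + 1) * eN (n - (j + 1)))) := by
    intro j hj
    rw [pow_succ, mul_neg_one, neg_smul]
  rw [Finset.sum_congr rfl hneg, Finset.sum_neg_distrib, neg_add_eq_zero] at h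
  rw [← h]
  conv_rhs => rw [← Finset.sum_range_reflect]
  apply Finset.sum_congr rfl
  intro j hj
  have hj' : j < n := Finset.mem_range.mp hj
  have e1 : n - 1 - (n - 1 - j) = j := by omega
  have e2 : n - (n - 1 - j) = j + 1 := by omega
  have e3 : n - 1 - j = n - (j + 1) := by omega
  rw [e1, e2, e3]
lemma copSum (n K : ℕ) (hK : K < n) :
    ∑ j ∈ Finset.range (K + 1), Cop ((n - j : ℕ) : ℤ) (eN j)
      = ((-q⁻¹ : F) ^ (n - K - 1)) •
          ∑ u ∈ Finset.range (K + 1), ((-1 : F) ^ (K - u)) • (hN (n - u) * eN u) := by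
  have step : ∀ j ∈ Finset.range (K + 1), Cop ((n - j : ℕ) : ℤ) (eN j)
      = ∑ r ∈ Finset.range (j + 1),
          ((-q⁻¹ : F) ^ (n - (j - r) - r - 1) * (q⁻¹ : F) ^ r * cc r) •
            (hN (n - (j - r)) * eN (j - r)) := by
    intro j hj
    have hj' : j < K + 1 := Finset.mem_range.mp hj
    rw [Cop_eN (n - j) j (by omega)]
    apply Finset.sum_congr rfl
    intro r hr
    have hr' : r < j + 1 := Finset.mem_range.mp hr
    have e1 : n - j - 1 = n - (j - r) - r - 1 := by omega
    have e2 : n - j + r = n - (j - r) := by omega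
    rw [e1, e2]
  rw [Finset.sum_congr rfl step]
  rw [← triangle (K + 1) (fun r u =>
    ((-q⁻¹ : F) ^ (n - u - r - 1) * (q⁻¹ : F) ^ r * cc r) • (hN (n - u) * eN u))]
  rw [triangle_swap]
  rw [Finset.smul_sum]
  apply Finset.sum_congr rfl
  intro u hu
  have hu' : u < K + 1 := Finset.mem_range.mp hu
  have hrw : K + 1 - u = (K - u) + 1 := by omega
  rw [hrw]
  have step2 : ∀ r ∈ Finset.range ((K - u) + 1),
      ((-q⁻¹ : F) ^ (n - u - r - 1) * (q⁻¹ : F) ^ r * cc r) • (hN (n - u) * eN u)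
        = ((-q⁻¹ : F) ^ (n - K - 1) * ((-q⁻¹ : F) ^ ((K - u) - r) * (q⁻¹ : F) ^ r * cc r)) •
            (hN (n - u) * eN u) := by
    intro r hr
    have hr' : r < (K - u) + 1 := Finset.mem_range.mp hr
    congr 1
    have e : n - u - r - 1 = (n - K - 1) + ((K - u) - r) := by omega
    rw [e, pow_add]
    ring
  rw [Finset.sum_congr rfl step2, ← Finset.sum_smul, ← Finset.mul_sum, scalarL (K - u),
    mul_smul]
lemma comp_blocks_ne_nil {n : ℕ} (hn : 1 ≤ n) (α : Composition n) : α.blocks ≠ [] := by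
  intro h
  have hs := α.blocks_sum
  rw [h] at hs
  simp at hs
  omega

lemma comp_headI_le {n : ℕ} (α : Composition n) : α.blocks.headI ≤ n := by
  have hs := α.blocks_sum
  cases hb : α.blocks with
  | nil => simp
  | cons a t =>
    rw [hb, List.sum_cons] at hs
    simp only [List.headI_cons]
    omega

lemma comp_headI_pos {n : ℕ} (hn : 1 ≤ n) (α : Composition n) : 1 ≤ α.blocks.headI := by
  cases hb : α.blocks with
  | nil => exact absurd hb (comp_blocks_ne_nil hn α)
  | cons a t =>
    simp only [List.headI_cons]
    exact α.blocks_pos (by rw [hb]; exact List.mem_cons_self)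

lemma comp_tail_sum {n : ℕ} (α : Composition n) : α.blocks.tail.sum = n - α.blocks.headI := by
  have hs := α.blocks_sum
  cases hb : α.blocks with
  | nil =>
    rw [hb] at hs
    simp at hs ⊢
    omega
  | cons a t =>
    rw [hb, List.sum_cons] at hs
    simp only [List.tail_cons, List.headI_cons]
    omega

lemma cons_sub_headI {n : ℕ} (hn : 1 ≤ n) (α : Composition n) :
    (n - (n - α.blocks.headI)) :: α.blocks.tail = α.blocks := by
  cases hb : α.blocks with
  | nil => exact absurd hb (comp_blocks_ne_nil hn α)
  | cons a t =>
    have hs := α.blocks_sum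
    rw [hb, List.sum_cons] at hs
    simp only [List.headI_cons, List.tail_cons]
    congr 1
    omega

/-- Sum of `Cfun` over compositions with head at least `n - K` decomposes by head. -/
lemma comp_filter_sum (n K : ℕ) (hK : K < n) :
    ∑ α ∈ Finset.univ.filter (fun α : Composition n => n - K ≤ α.blocks.headI), Cfun α.blocks
      = ∑ j ∈ Finset.range (K + 1),
          Cop ((n - j : ℕ) : ℤ) (∑ β : Composition j, Cfun β.blocks) := by
  have hstep : ∀ j ∈ Finset.range (K + 1),
      Cop ((n - j : ℕ) : ℤ) (∑ β : Composition j, Cfun β.blocks)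
        = ∑ l ∈ Finset.univ.image (Composition.blocks (n := j)), Cfun ((n - j) :: l) := by
    intro j _
    rw [Cop_sum]
    rw [Finset.sum_image (fun x _ y _ h => Composition.ext h)]
    apply Finset.sum_congr rfl
    intro β _
    rfl
  rw [Finset.sum_congr rfl hstep, Finset.sum_sigma']
  classical
  apply Finset.sum_nbij'
    (i := fun (α : Composition n) =>
      (⟨n - α.blocks.headI, α.blocks.tail⟩ : Σ _ : ℕ, List ℕ))
    (j := fun p => if h : p.1 < n ∧ (∀ i ∈ p.2, 0 < i) ∧ p.2.sum = p.1 then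
        (⟨(n - p.1) :: p.2, fun hi => by
            rcases List.mem_cons.mp hi with h1 | h2
            · omega
            · exact h.2.1 _ h2, by
            rw [List.sum_cons, h.2.2]; omega⟩ : Composition n)
      else default)
  · -- hi
    intro α hα
    simp only [Finset.mem_filter, Finset.mem_univ, true_and] at hα
    simp only [Finset.mem_sigma, Finset.mem_range, Finset.mem_image, Finset.mem_univ, true_and]
    constructor
    · have := comp_headI_le α
      omega
    · exact ⟨⟨α.blocks.tail, fun hi => α.blocks_pos (List.mem_of_mem_tail hi),
        comp_tail_sum α⟩, rfl⟩
  · -- hj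
    intro p hp
    simp only [Finset.mem_sigma, Finset.mem_range, Finset.mem_image, Finset.mem_univ,
      true_and] at hp
    obtain ⟨hj, β, hβ⟩ := hp
    have hcond : p.1 < n ∧ (∀ i ∈ p.2, 0 < i) ∧ p.2.sum = p.1 :=
      ⟨by omega, fun i hi => β.blocks_pos (hβ ▸ hi), by rw [← hβ, β.blocks_sum]⟩
    rw [dif_pos hcond]
    apply Finset.mem_filter.mpr
    refine ⟨Finset.mem_univ _, ?_⟩
    show n - K ≤ ((n - p.1) :: p.2).headI
    rw [List.headI_cons]
    omega
  · -- left_inv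
    intro α hα
    have h1 : 1 ≤ α.blocks.headI := comp_headI_pos (by omega) α
    have h2 : α.blocks.headI ≤ n := comp_headI_le α
    have hcond : n - α.blocks.headI < n ∧ (∀ i ∈ α.blocks.tail, 0 < i) ∧
        α.blocks.tail.sum = n - α.blocks.headI :=
      ⟨by omega, fun i hi => α.blocks_pos (List.mem_of_mem_tail hi), comp_tail_sum α⟩
    show dite _ _ _ = α
    rw [dif_pos hcond]
    apply Composition.ext
    show (n - (n - α.blocks.headI)) :: α.blocks.tail = α.blocks
    exact cons_sub_headI (by omega) α
  · -- right_inv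
    intro p hp
    obtain ⟨j0, l⟩ := p
    simp only [Finset.mem_sigma, Finset.mem_range, Finset.mem_image, Finset.mem_univ,
      true_and] at hp
    obtain ⟨hj, β, hβ⟩ := hp
    have hcond : (⟨j0, l⟩ : Σ _ : ℕ, List ℕ).1 < n ∧ (∀ i ∈ (⟨j0, l⟩ : Σ _ : ℕ, List ℕ).2, 0 < i) ∧
        (⟨j0, l⟩ : Σ _ : ℕ, List ℕ).2.sum = (⟨j0, l⟩ : Σ _ : ℕ, List ℕ).1 :=
      ⟨(by omega : j0 < n), fun i hi => β.blocks_pos (hβ ▸ hi),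
        (by rw [← hβ, β.blocks_sum] : l.sum = j0)⟩
    rw [dif_pos hcond]
    show (⟨n - ((n - j0) :: l).headI, ((n - j0) :: l).tail⟩ : Σ _ : ℕ, List ℕ) = ⟨j0, l⟩
    simp only [List.headI_cons, List.tail_cons]
    have e : n - (n - j0) = j0 := by omega
    rw [e]
  · -- h
    intro α hα
    show Cfun α.blocks = Cfun ((n - (n - α.blocks.headI)) :: α.blocks.tail)
    rw [cons_sub_headI (by omega) α]
lemma hh_nat (m : ℕ) : hh (m : ℤ) = hN m := by simp [hh]
lemma ee_nat (m : ℕ) : ee (m : ℤ) = eN m := by simp [ee]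

lemma comp_zero_blocks (α : Composition 0) : α.blocks = [] := by
  cases hb : α.blocks with
  | nil => rfl
  | cons a t =>
    have hs := α.blocks_sum
    rw [hb, List.sum_cons] at hs
    have := α.blocks_pos (by rw [hb]; exact List.mem_cons_self)
    omega

lemma compSumC_zero : (∑ β : Composition 0, Cfun β.blocks) = 1 := by
  have hu : (Finset.univ : Finset (Composition 0))
      = {⟨[], by simp, by simp⟩} := by
    apply Finset.eq_singleton_iff_unique_mem.mpr
    exact ⟨Finset.mem_univ _, fun x _ => Composition.ext (comp_zero_blocks x)⟩
  rw [hu, Finset.sum_singleton]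
  rfl

lemma compSumC_eq (m : ℕ) : (∑ β : Composition m, Cfun β.blocks) = eN m := by
  induction m using Nat.strong_induction_on with
  | _ m ih =>
  match m with
  | 0 => rw [compSumC_zero]; simp [eN]
  | Nat.succ m =>
    have hfilter : Finset.univ.filter
        (fun α : Composition (m + 1) => (m + 1) - m ≤ α.blocks.headI) = Finset.univ := by
      apply Finset.filter_true_of_mem
      intro α _
      have := comp_headI_pos (by omega) α
      omega
    have h := comp_filter_sum (m + 1) m (by omega)
    rw [hfilter] at h
    rw [h]
    have hstep : ∀ j ∈ Finset.range (m + 1),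
        Cop (((m + 1) - j : ℕ) : ℤ) (∑ β : Composition j, Cfun β.blocks)
          = Cop (((m + 1) - j : ℕ) : ℤ) (eN j) := by
      intro j hj
      have hj' : j < m + 1 := Finset.mem_range.mp hj
      rw [ih j (by omega)]
    rw [Finset.sum_congr rfl hstep, copSum (m + 1) m (by omega)]
    have h0 : (m + 1) - m - 1 = 0 := by omega
    rw [h0, pow_zero, one_smul, eN_expand (m + 1) (by omega)]
    apply Finset.sum_congr rfl
    intro u hu
    have hu' : u < m + 1 := Finset.mem_range.mp hu
    have e : m + 1 - 1 - u = m - u := by omega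
    rw [e]
/-- for `0 ≤ k < n`, the hook Schur function
`s_{(n-k,1^k)} = ∑_{i=0}^{k} (-1)^i h_{n-k+i} e_{k-i}` satisfies
`s_{(n-k,1^k)} = (-q)^{n-k-1} ∑_{α ⊨ n, α₁ ≥ n-k} C_α[X;q]`. -/
theorem stmt18 (n k : ℕ) (hk : k < n) :
    ∑ i ∈ Finset.range (k + 1),
        ((-1 : F) ^ i) • (hh ((n : ℤ) - k + i) * ee ((k : ℤ) - i)) =
      ((-q : F) ^ ((n : ℤ) - k - 1)) •
        ∑ α ∈ Finset.univ.filter fun α : Composition n => n - k ≤ α.blocks.headI,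
          Cfun α.blocks := by
  rw [comp_filter_sum n k hk]
  have hstep : ∀ j ∈ Finset.range (k + 1),
      Cop ((n - j : ℕ) : ℤ) (∑ β : Composition j, Cfun β.blocks)
        = Cop ((n - j : ℕ) : ℤ) (eN j) := by
    intro j _
    rw [compSumC_eq j]
  rw [Finset.sum_congr rfl hstep, copSum n k hk]
  have hz : ((n : ℤ) - k - 1) = ((n - k - 1 : ℕ) : ℤ) := by omega
  rw [hz, zpow_natCast, smul_smul, ← mul_pow, neg_mul_neg, mul_inv_cancel₀ q_ne_zero,
    one_pow, one_smul]
  conv_rhs => rw [← Finset.sum_range_reflect]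
  apply Finset.sum_congr rfl
  intro i hi
  have hi' : i < k + 1 := Finset.mem_range.mp hi
  have e0 : k + 1 - 1 - i = k - i := by omega
  have e1 : k - (k - i) = i := by omega
  have e2 : n - (k - i) = n - k + i := by omega
  have e3 : (n : ℤ) - k + i = ((n - k + i : ℕ) : ℤ) := by omega
  have e4 : (k : ℤ) - i = ((k - i : ℕ) : ℤ) := by omega
  rw [e0, e1, e2, e3, e4, hh_nat, ee_nat]
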